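/- arXiv:2301.09691 — 2 statements merged into one kernel-verified Lean document; each statement's English description precedes it below -/
import Mathlib

section
/- Let G₀ ⊇ G₁ ⊇ G₂ ⊇ ⋯ be a descending chain of normal subgroups of a group G = G₀ such that each quotient G_{i-1}/G_i maps with central image into G/G_i, the chain terminates at the trivial subgroup after finitely many steps, and each successive quotient G_{i-1}/G_i is abelian and T-local (uniquely q-divisible for all primes q ∉ T). Then G is a nilpotent group and every element of G has a unique q-th root for every prime q ∉ T. -/
open scoped commutatorElement

/-- let `Gs 0 = ⊤ ⊇ Gs 1 ⊇ ⋯` be a descending chain of normal subgroups of `G`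
terminating at `⊥`, such that each quotient `Gs i / Gs (i+1)` maps with central image into
`G / Gs (i+1)` (i.e. `⁅x, g⁆ ∈ Gs (i+1)` for `x ∈ Gs i`, `g ∈ G`; in particular each quotient
is abelian), and each quotient `Gs i / Gs (i+1)` is `T`-local: for every prime `q ∉ T` the
`q`-th power map is bijective modulo `Gs (i+1)`. Then `G` is nilpotent and every element of
`G` has a unique `q`-th root for every prime `q ∉ T`. -/
theorem stmt9 (T : Set ℕ) {G : Type} [Group G] (Gs : ℕ → Subgroup G)
    (htop : Gs 0 = ⊤)
    (hdesc : ∀ i : ℕ, Gs (i + 1) ≤ Gs i)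
    (hnormal : ∀ i : ℕ, (Gs i).Normal)
    (hbot : ∃ N : ℕ, Gs N = ⊥)
    (hcentral : ∀ i : ℕ, ∀ x ∈ Gs i, ∀ g : G, ⁅x, g⁆ ∈ Gs (i + 1))
    (hlocal : ∀ i : ℕ, ∀ q : ℕ, q.Prime → q ∉ T →
      (∀ x ∈ Gs i, ∃ y ∈ Gs i, y ^ q * x⁻¹ ∈ Gs (i + 1)) ∧
      (∀ y ∈ Gs i, y ^ q ∈ Gs (i + 1) → y ∈ Gs (i + 1))) :
    Group.IsNilpotent G ∧
      ∀ q : ℕ, q.Prime → q ∉ T → ∀ x : G, ∃! y : G, y ^ q = x := by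
  obtain ⟨N, hN⟩ := hbot
  -- elements of `Gs j` are central modulo `Gs (j+1)`
  have hcomm : ∀ j : ℕ, ∀ w ∈ Gs j, ∀ g : G,
      haveI := hnormal (j + 1)
      Commute (QuotientGroup.mk' (Gs (j + 1)) w) (QuotientGroup.mk' (Gs (j + 1)) g) := by
    intro j w hw g
    haveI := hnormal (j + 1)
    rw [← commutatorElement_eq_one_iff_commute, ← map_commutatorElement]
    rw [QuotientGroup.mk'_apply, QuotientGroup.eq_one_iff]
    exact hcentral j w hw g
  constructor
  · rw [nilpotent_iff_finite_descending_central_series]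
    refine ⟨N, Gs, ⟨htop, fun x n hx g => ?_⟩, hN⟩
    have := hcentral n x hx g
    simpa [commutatorElement_def, mul_assoc] using this
  · intro q hq hqT x
    -- surjectivity helper
    have surj : ∀ k j : ℕ, j + k = N → ∀ y x : G, y ^ q * x⁻¹ ∈ Gs j →
        ∃ w ∈ Gs j, (y * w) ^ q = x := by
      intro k
      induction k with
      | zero =>
        intro j hj y x hyx
        refine ⟨1, one_mem _, ?_⟩
        have hjN : j = N := by omega
        have : y ^ q * x⁻¹ = 1 := by
          have := hyx
          rw [hjN, hN] at this
          simpa using this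
        rw [mul_one]
        exact mul_inv_eq_one.mp this
      | succ k ih =>
        intro j hj y x hyx
        haveI := hnormal (j + 1)
        haveI := hnormal j
        -- y⁻¹^q * x ∈ Gs j
        have h1 : x * (y ^ q)⁻¹ ∈ Gs j := by
          have := (Gs j).inv_mem hyx
          simpa using this
        have h2 : (y ^ q)⁻¹ * x ∈ Gs j := by
          have := (hnormal j).conj_mem _ h1 (y ^ q)⁻¹
          simpa [mul_assoc] using this
        obtain ⟨w, hw, hwq⟩ := (hlocal j q hq hqT).1 _ h2
        -- claim : (y * w) ^ q * x⁻¹ ∈ Gs (j+1)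
        have key : (y * w) ^ q * x⁻¹ ∈ Gs (j + 1) := by
          rw [← QuotientGroup.eq_one_iff]
          have hc := (hcomm j w hw y).symm
          have hmul : (QuotientGroup.mk' (Gs (j + 1))) ((y * w) ^ q)
              = (QuotientGroup.mk' (Gs (j + 1))) (y ^ q) *
                (QuotientGroup.mk' (Gs (j + 1))) (w ^ q) := by
            rw [map_pow, map_mul, hc.mul_pow, map_pow, map_pow]
          have hw1 : (QuotientGroup.mk' (Gs (j + 1))) (w ^ q * ((y ^ q)⁻¹ * x)⁻¹) = 1 := by
            rw [QuotientGroup.mk'_apply, QuotientGroup.eq_one_iff]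
            exact hwq
          have hw2 : (QuotientGroup.mk' (Gs (j + 1))) (w ^ q)
              = (QuotientGroup.mk' (Gs (j + 1))) ((y ^ q)⁻¹ * x) := by
            rw [map_mul, map_inv] at hw1
            exact mul_inv_eq_one.mp hw1
          have key2 : (QuotientGroup.mk' (Gs (j + 1))) ((y * w) ^ q * x⁻¹) = 1 := by
            rw [map_mul, hmul, hw2, map_mul, map_inv, map_inv]
            group
          exact key2
        obtain ⟨w', hw', hww'⟩ := ih (j + 1) (by omega) (y * w) x key
        exact ⟨w * w', (Gs j).mul_mem hw (hdesc j hw'), by rwa [← mul_assoc]⟩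
    -- injectivity helper
    have inj : ∀ k j : ℕ, j + k = N → ∀ y w : G, w ∈ Gs j → (y * w) ^ q = y ^ q → w = 1 := by
      intro k
      induction k with
      | zero =>
        intro j hj y w hw _
        have hjN : j = N := by omega
        rw [hjN, hN] at hw
        simpa using hw
      | succ k ih =>
        intro j hj y w hw heq
        haveI := hnormal (j + 1)
        have hwq : w ^ q ∈ Gs (j + 1) := by
          rw [← QuotientGroup.eq_one_iff]
          have hc := (hcomm j w hw y).symm
          have : (QuotientGroup.mk' (Gs (j + 1))) ((y * w) ^ q)
              = (QuotientGroup.mk' (Gs (j + 1))) (y ^ q) *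
                (QuotientGroup.mk' (Gs (j + 1))) (w ^ q) := by
            rw [map_pow, map_mul, hc.mul_pow, map_pow, map_pow]
          rw [heq] at this
          have h3 := mul_eq_left.mp this.symm
          exact h3
        have hw' : w ∈ Gs (j + 1) := (hlocal j q hq hqT).2 w hw hwq
        exact ih (j + 1) (by omega) y w hw' heq
    obtain ⟨w, _, hwx⟩ := surj N 0 (by omega) 1 x (by rw [htop]; trivial)
    have hwx' : w ^ q = x := by rwa [one_mul] at hwx
    refine ⟨w, hwx', ?_⟩
    intro z hz
    have hmem : w⁻¹ * z ∈ Gs 0 := by rw [htop]; trivial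
    have heq : (w * (w⁻¹ * z)) ^ q = w ^ q := by
      rw [mul_inv_cancel_left, hz, hwx']
    have h1 := inj N 0 (by omega) w (w⁻¹ * z) hmem heq
    exact (inv_mul_eq_one.mp h1).symm
end

section
/- Let G be a nilpotent group such that every abelian subquotient of its lower central series is T-local (uniquely q-divisible for q ∉ T). Then for every prime q ∉ T, the q-th power map G → G, x ↦ x^q, is bijective. -/
open scoped commutatorElement

private lemma aux_commute' {G : Type} [Group G] (i : ℕ) {y : G}
    (hy : y ∈ (⊤ : Subgroup G).lowerCentralSeries i) (g : G) :
    Commute ((g : G ⧸ (⊤ : Subgroup G).lowerCentralSeries (i+1))) (y : G ⧸ (⊤ : Subgroup G).lowerCentralSeries (i+1)) := by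
  have h : ⁅y⁻¹, g⁻¹⁆ ∈ (⊤ : Subgroup G).lowerCentralSeries (i+1) := by
    rw [Subgroup.lowerCentralSeries_succ]
    exact Subgroup.commutator_mem_commutator (inv_mem hy) (Subgroup.mem_top _)
  show _ = _
  rw [← QuotientGroup.mk_mul, ← QuotientGroup.mk_mul, QuotientGroup.eq]
  convert h using 1
  rw [commutatorElement_def]
  group

/-- if `G` is a nilpotent group such that each quotient
`Γᵢ/Γᵢ₊₁` of its lower central series is `T`-local (for every prime `q ∉ T` the `q`-th power
map is bijective modulo `Γᵢ₊₁`), then for every prime `q ∉ T` the `q`-th power map on `G`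
is bijective. -/
theorem stmt10 (T : Set ℕ) {G : Type} [Group G] [Group.IsNilpotent G]
    (hlocal : ∀ i : ℕ, ∀ q : ℕ, q.Prime → q ∉ T →
      (∀ x ∈ (⊤ : Subgroup G).lowerCentralSeries i, ∃ y ∈ (⊤ : Subgroup G).lowerCentralSeries i,
          y ^ q * x⁻¹ ∈ (⊤ : Subgroup G).lowerCentralSeries (i + 1)) ∧
      (∀ y ∈ (⊤ : Subgroup G).lowerCentralSeries i, y ^ q ∈ (⊤ : Subgroup G).lowerCentralSeries (i + 1) →
          y ∈ (⊤ : Subgroup G).lowerCentralSeries (i + 1))) :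
    ∀ q : ℕ, q.Prime → q ∉ T → Function.Bijective (fun x : G => x ^ q) := by
  intro q hq hqT
  obtain ⟨n, hn⟩ := nilpotent_iff_lowerCentralSeries.mp ‹Group.IsNilpotent G›
  constructor
  · -- injectivity
    intro x y hxy
    simp only at hxy
    have key : ∀ i, x * y⁻¹ ∈ (⊤ : Subgroup G).lowerCentralSeries i := by
      intro i
      induction i with
      | zero => rw [Subgroup.lowerCentralSeries_zero]; exact Subgroup.mem_top _
      | succ i ih =>
        apply (hlocal i q hq hqT).2 _ ih
        rw [← QuotientGroup.eq_one_iff]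
        have hcomm := aux_commute' i ih y
        have hx : ((x : G ⧸ (⊤ : Subgroup G).lowerCentralSeries (i+1))) =
            ((x * y⁻¹ : G) : G ⧸ (⊤ : Subgroup G).lowerCentralSeries (i+1)) * (y : G) := by
          rw [← QuotientGroup.mk_mul]
          congr 1
          group
        have := congrArg (QuotientGroup.mk (s := (⊤ : Subgroup G).lowerCentralSeries (i+1))) hxy
        rw [QuotientGroup.mk_pow, QuotientGroup.mk_pow, hx, hcomm.symm.mul_pow] at this
        have h2 : ((x * y⁻¹ : G) : G ⧸ (⊤ : Subgroup G).lowerCentralSeries (i+1)) ^ q = 1 :=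
          mul_eq_right.mp this
        rw [← QuotientGroup.mk_pow] at h2
        exact h2
    have := key n
    rw [hn, Subgroup.mem_bot, mul_inv_eq_one] at this
    exact this
  · -- surjectivity
    intro g
    have key : ∀ i, ∃ x : G, x ^ q * g⁻¹ ∈ (⊤ : Subgroup G).lowerCentralSeries i := by
      intro i
      induction i with
      | zero => exact ⟨1, by rw [Subgroup.lowerCentralSeries_zero]; exact Subgroup.mem_top _⟩
      | succ i ih =>
        obtain ⟨x, hx⟩ := ih
        obtain ⟨y, hy, hyq⟩ := (hlocal i q hq hqT).1 _ (inv_mem hx)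
        rw [inv_inv] at hyq
        refine ⟨x * y, ?_⟩
        rw [← QuotientGroup.eq_one_iff]
        have hcy := aux_commute' i hy
        have hxy : ((x * y : G) : G ⧸ (⊤ : Subgroup G).lowerCentralSeries (i+1)) ^ q =
            (x : G ⧸ (⊤ : Subgroup G).lowerCentralSeries (i+1)) ^ q * (y : G) ^ q := by
          rw [QuotientGroup.mk_mul, (hcy x).mul_pow]
        rw [QuotientGroup.mk_mul, QuotientGroup.mk_pow, hxy]
        have hrot : (x : G ⧸ (⊤ : Subgroup G).lowerCentralSeries (i+1)) ^ q * (y:G) ^ q * (g⁻¹ : G) =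
            ((x ^ q * g⁻¹ : G) : G ⧸ (⊤ : Subgroup G).lowerCentralSeries (i+1)) * (y:G) ^ q := by
          rw [QuotientGroup.mk_mul, QuotientGroup.mk_pow]
          rw [mul_assoc, ← ((hcy g⁻¹).pow_right q).eq, ← mul_assoc]
        rw [hrot]
        have hc2 := (aux_commute' i hx (y ^ q))
        rw [QuotientGroup.mk_pow] at hc2
        rw [← hc2.eq, ← QuotientGroup.mk_pow, ← QuotientGroup.mk_mul,
          QuotientGroup.eq_one_iff]
        exact hyq
    obtain ⟨x, hx⟩ := key n
    rw [hn, Subgroup.mem_bot, mul_inv_eq_one] at hx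
    exact ⟨x, hx⟩
end
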